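/- The Fibonacci code is a prefix code: for distinct positive integers m and n, the codeword F(m) is not a prefix of the codeword F(n). -/

import Mathlib

/-- Fibonacci numbers indexed so that `F 1 = 1`, `F 2 = 2`, `F (i+2) = F (i+1) + F i`
(and `F 0 = 1`). -/
def F (i : ℕ) : ℕ := Nat.fib (i + 1)

/-- Zeckendorf coefficient sequence of `n` with top index `p`. -/
def IsZeck (n p : ℕ) (a : ℕ → ℕ) : Prop :=
  0 < p ∧ (∀ i, a i ≤ 1) ∧ a p = 1 ∧ (∀ i, a i * a (i + 1) = 0) ∧
    n = ∑ i ∈ Finset.Icc 1 p, a i * F i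

/-- The Fibonacci codeword determined by Zeckendorf coefficients `a_1 … a_p`:
the bit string `a_1 a_2 … a_p 1`. -/
def code (p : ℕ) (a : ℕ → ℕ) : List Bool :=
  ((List.range p).map fun i => decide (a (i + 1) = 1)) ++ [true]

lemma code_length (p : ℕ) (a : ℕ → ℕ) : (code p a).length = p + 1 := by
  simp [code]

lemma code_get_lt (p : ℕ) (a : ℕ → ℕ) (i : ℕ) (hi : i < p) :
    (code p a)[i]'(by simp [code_length]; omega) = decide (a (i + 1) = 1) := by
  unfold code
  rw [List.getElem_append_left (by simpa using hi)]
  simp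

lemma code_get_top (p : ℕ) (a : ℕ → ℕ) :
    (code p a)[p]'(by simp [code_length]) = true := by
  unfold code
  rw [List.getElem_append_right (by simp)]
  simp

/-- The Fibonacci code is a prefix code: for distinct positive integers `m` and `n`,
the codeword of `m` is not a prefix of the codeword of `n`. -/
theorem fib_code_is_prefix_code (m n : ℕ) (hm : 0 < m) (hn : 0 < n) (hmn : m ≠ n)
    (p q : ℕ) (a b : ℕ → ℕ) (ha : IsZeck m p a) (hb : IsZeck n q b) :
    ¬ (code p a <+: code q b) := by
  obtain ⟨hp, ha1, hap, hadj, hmsum⟩ := ha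
  obtain ⟨hq, hb1, hbq, hbadj, hnsum⟩ := hb
  intro hpre
  have hpq : p ≤ q := by
    have := hpre.length_le
    simp only [code_length] at this
    omega
  rcases lt_or_eq_of_le hpq with hlt | heq
  · -- b p = 1 from index p-1, b (p+1) = 1 from index p
    have h1 : b p = 1 := by
      have e := hpre.getElem (i := p - 1) (by simp [code_length])
      rw [code_get_lt p a (p-1) (by omega), code_get_lt q b (p-1) (by omega)] at e
      have : p - 1 + 1 = p := by omega
      rw [this] at e
      rw [hap] at e
      simpa using e.symm
    have h2 : b (p + 1) = 1 := by
      have e := hpre.getElem (i := p) (by simp [code_length])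
      rw [code_get_top, code_get_lt q b p hlt] at e
      simpa using e.symm
    have := hbadj p
    rw [h1, h2] at this
    omega
  · -- p = q: coefficients agree, so m = n
    subst heq
    have hco : ∀ i ∈ Finset.Icc 1 p, a i * F i = b i * F i := by
      intro i hi
      simp only [Finset.mem_Icc] at hi
      have e := hpre.getElem (i := i - 1) (by simp [code_length]; omega)
      rw [code_get_lt p a (i-1) (by omega), code_get_lt p b (i-1) (by omega)] at e
      have hii : i - 1 + 1 = i := by omega
      rw [hii] at e
      have e' : (a i = 1) ↔ (b i = 1) := by simpa using e
      have h1 := ha1 i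
      have h2 := hb1 i
      have : a i = b i := by omega
      rw [this]
    have : m = n := by rw [hmsum, hnsum]; exact Finset.sum_congr rfl hco
    exact hmn this
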